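/- Let α0, d ∈ ℚ (or any field of characteristic zero) with d ≠ 0, and β1 ∈ ℚ. Then the rational function f(x) = (x-α0-2d)^2 (x-α0)^2 / (x-α0-d)^2 satisfies f = g ∘ h, where h(x) = β1 + (x-α0)^2/(x-α0-d) and g(x) = (x-β1)(x-β1-4d). -/

import Mathlib

open RatFunc

/-- f(x) = (x-α0-2d)²(x-α0)²/(x-α0-d)² decomposes as g ∘ h with
h(x) = β1 + (x-α0)²/(x-α0-d) and g(x) = (x-β1)(x-β1-4d), for d ≠ 0. -/
theorem stmt_11 (k : Type*) [Field k] [CharZero k] (α0 d β1 : k) (hd : d ≠ 0) :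
    let x : RatFunc k := RatFunc.X
    let h : RatFunc k := RatFunc.C β1 + (x - RatFunc.C α0) ^ 2 / (x - RatFunc.C α0 - RatFunc.C d)
    let g : RatFunc k → RatFunc k := fun t => (t - RatFunc.C β1) * (t - RatFunc.C β1 - RatFunc.C (4 * d))
    g h = (x - RatFunc.C (α0 + 2 * d)) ^ 2 * (x - RatFunc.C α0) ^ 2 /
        (x - RatFunc.C (α0 + d)) ^ 2 := by
  intro x h g
  have hxc : ∀ c : k, x - RatFunc.C c ≠ 0 := fun c => by
    have := RatFunc.algebraMap_ne_zero (Polynomial.X_sub_C_ne_zero (R := k) c)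
    simpa [map_sub, RatFunc.algebraMap_X, RatFunc.algebraMap_C] using this
  have hb : x - RatFunc.C α0 - RatFunc.C d ≠ 0 := by
    have := hxc (α0 + d); rw [map_add] at this
    intro he; exact this (by linear_combination he)
  have hb2 : (x - RatFunc.C (α0 + d)) ^ 2 ≠ 0 := pow_ne_zero _ (hxc _)
  simp only [h, g]
  rw [eq_div_iff hb2, map_add]
  field_simp
  simp only [map_mul, map_add, map_ofNat]
  ring
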